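/- arXiv:1601.02270 — 2 statements merged into one kernel-verified Lean document; each statement's English description precedes it below -/
import Mathlib

section
/- In a proper unital *-ring A with A_Σ salient, the cone 𝔠 = {a : a^*a ⪯ n·a for some n ∈ ℕ, n ≥ 1} satisfies 𝔠 = 𝔠^*, 𝔠 + 𝔠 = 𝔠, and 𝔠 ∩ (−𝔠) = {0}. -/
open Pointwise

/-- Finite sums of elements of the form `star a * a`. -/
def sSums (A : Type*) [Ring A] [StarRing A] : Set A :=
  (AddSubmonoid.closure {x : A | ∃ a : A, x = star a * a} : Set A)

/-- The *-positive elements. -/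
def pos (A : Type*) [Ring A] [StarRing A] : Set A :=
  {a : A | ∃ n : ℕ, 0 < n ∧ n • a ∈ sSums A}

/-- The *-accretive elements. -/
def accr (A : Type*) [Ring A] [StarRing A] : Set A :=
  {a : A | a + star a ∈ pos A}

/-- The order `a ⪯ b ⟺ b - a ∈ 𝔯`. -/
def ple {A : Type*} [Ring A] [StarRing A] (a b : A) : Prop := b - a ∈ accr A

/-- The cone `𝔠`. -/
def cone (A : Type*) [Ring A] [StarRing A] : Set A :=
  {a : A | ∃ n : ℕ, 0 < n ∧ ple (star a * a) (n • a)}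

/-- The ball `𝔅`. -/
def ball (A : Type*) [Ring A] [StarRing A] : Set A :=
  {a : A | ple (star a * a) 1}

section helper
variable {A : Type*} [Ring A] [StarRing A]

lemma sSums_zero : (0:A) ∈ sSums A := (AddSubmonoid.closure _).zero_mem

lemma sSums_add {x y : A} (hx : x ∈ sSums A) (hy : y ∈ sSums A) : x + y ∈ sSums A :=
  AddSubmonoid.add_mem _ hx hy

lemma sSums_gen (a : A) : star a * a ∈ sSums A := AddSubmonoid.subset_closure ⟨a, rfl⟩

lemma sSums_nsmul {x : A} (n : ℕ) (hx : x ∈ sSums A) : n • x ∈ sSums A :=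
  nsmul_mem hx n

lemma sSums_conj {x : A} (hx : x ∈ sSums A) (b : A) : b * x * star b ∈ sSums A := by
  induction hx using AddSubmonoid.closure_induction with
  | mem y hy => obtain ⟨a, rfl⟩ := hy
                have : b * (star a * a) * star b = star (a * star b) * (a * star b) := by
                  simp [star_mul, mul_assoc]
                rw [this]; exact sSums_gen _
  | zero => simpa using sSums_zero
  | add y z _ _ hy hz =>
      have : b * (y + z) * star b = b * y * star b + b * z * star b := by noncomm_ring
      rw [this]; exact sSums_add hy hz

lemma pos_of_sSums {x : A} (hx : x ∈ sSums A) : x ∈ pos A :=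
  ⟨1, one_pos, by simpa using hx⟩

lemma pos_congr {x y : A} (h : x = y) (hx : x ∈ pos A) : y ∈ pos A := h ▸ hx

lemma pos_add {x y : A} (hx : x ∈ pos A) (hy : y ∈ pos A) : x + y ∈ pos A := by
  obtain ⟨k, hk, hkx⟩ := hx
  obtain ⟨l, hl, hly⟩ := hy
  refine ⟨k * l, Nat.mul_pos hk hl, ?_⟩
  have : (k * l) • (x + y) = l • (k • x) + k • (l • y) := by
    rw [smul_add, smul_smul, smul_smul, Nat.mul_comm l k]
  rw [this]
  exact sSums_add (sSums_nsmul l hkx) (sSums_nsmul k hly)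

lemma pos_nsmul {x : A} (n : ℕ) (hx : x ∈ pos A) : n • x ∈ pos A := by
  obtain ⟨k, hk, hkx⟩ := hx
  exact ⟨k, hk, by rw [smul_comm]; exact sSums_nsmul n hkx⟩

lemma pos_unsmul {x : A} {n : ℕ} (hn : 0 < n) (hx : n • x ∈ pos A) : x ∈ pos A := by
  obtain ⟨k, hk, hkx⟩ := hx
  exact ⟨k * n, Nat.mul_pos hk hn, by rwa [mul_smul]⟩

lemma pos_conj {x : A} (hx : x ∈ pos A) (b : A) : b * x * star b ∈ pos A := by
  obtain ⟨k, hk, hkx⟩ := hx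
  refine ⟨k, hk, ?_⟩
  have : k • (b * x * star b) = b * (k • x) * star b := by
    rw [mul_smul_comm, smul_mul_assoc]
  rw [this]
  exact sSums_conj hkx b

lemma cone_iff {a : A} :
    a ∈ cone A ↔ ∃ n : ℕ, 0 < n ∧ n • (a + star a) - 2 • (star a * a) ∈ pos A := by
  refine exists_congr fun n => and_congr_right fun _ => ?_
  show (n • a - star a * a) + star (n • a - star a * a) ∈ pos A ↔ _
  have : (n • a - star a * a) + star (n • a - star a * a)
      = n • (a + star a) - 2 • (star a * a) := by
    simp only [star_sub, star_nsmul, star_mul, star_star]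
    module
  rw [this]

lemma key_id (w c c' : A) (e : c * w * c' = c * c' * w) :
    w * (w - c * c') = (w - c * c') * (w - c * c') + c * (w - c' * c) * c' := by
  have e2 : c * (w - c' * c) * c' = c * c' * (w - c * c') := by
    rw [mul_sub, sub_mul, mul_sub, e]; noncomm_ring
  rw [e2]; noncomm_ring

lemma cone_star {a : A} (h : a ∈ cone A) : star a ∈ cone A := by
  obtain ⟨n, hn, hP⟩ := cone_iff.mp h
  set ν : A := (n : A) with hν
  set c : A := ν - (a + a) with hc
  set c' : A := ν - (star a + star a) with hc'
  have hcc' : star c = c' := by rw [hc, hc', hν]; simp [star_sub, star_add]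
  have hc'c : star c' = c := by rw [← hcc', star_star]
  -- expansions
  have hp' : ν ^ 2 - c' * c = 2 • (n • (a + star a) - 2 • (star a * a)) := by
    have h1 : c' * c = ν * ν - ν * (a + a) - ((star a + star a) * ν
        - (star a + star a) * (a + a)) := by rw [hc, hc']; noncomm_ring
    rw [h1, (Nat.cast_commute n (star a + star a)).symm.eq]
    simp only [smul_sub, nsmul_eq_mul, Nat.cast_ofNat, ← hν]
    noncomm_ring
  have hq' : ν ^ 2 - c * c' = 2 • (n • (a + star a) - 2 • (a * star a)) := by
    have h1 : c * c' = ν * ν - ν * (star a + star a) - ((a + a) * ν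
        - (a + a) * (star a + star a)) := by rw [hc, hc']; noncomm_ring
    rw [h1, (Nat.cast_commute n (a + a)).symm.eq]
    simp only [smul_sub, nsmul_eq_mul, Nat.cast_ofNat, ← hν]
    noncomm_ring
  set Q : A := n • (a + star a) - 2 • (a * star a) with hQ
  have hkey := key_id (ν ^ 2) c c' (by
    rw [mul_assoc, ((Nat.cast_commute n c').pow_left 2).eq, ← mul_assoc])
  have selfadj : star (ν ^ 2 - c * c') = ν ^ 2 - c * c' := by
    rw [star_sub, star_mul, hcc', hc'c, star_pow, hν, star_natCast]
  have sq_mem : (ν ^ 2 - c * c') * (ν ^ 2 - c * c') ∈ sSums A := by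
    have := sSums_gen (A := A) (ν ^ 2 - c * c')
    rwa [selfadj] at this
  have conj_mem : c * (ν ^ 2 - c' * c) * c' ∈ pos A := by
    rw [hp', ← hcc']
    exact pos_conj (pos_nsmul 2 hP) c
  have hsum : ν ^ 2 * (ν ^ 2 - c * c') ∈ pos A := by
    rw [hkey]
    exact pos_add (pos_of_sSums sq_mem) conj_mem
  have hQpos : Q ∈ pos A := by
    refine pos_unsmul (n := n ^ 2 * 2) (by positivity) ?_
    refine pos_congr ?_ hsum
    rw [hq']
    rw [nsmul_eq_mul, nsmul_eq_mul, hν]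
    push_cast
    noncomm_ring
  refine cone_iff.mpr ⟨n, hn, ?_⟩
  refine pos_congr ?_ hQpos
  rw [hQ, star_star]
  module

lemma cone_s_pos {a : A} {n : ℕ} (hn : 0 < n)
    (hP : n • (a + star a) - 2 • (star a * a) ∈ pos A) : a + star a ∈ pos A := by
  refine pos_unsmul hn (x := a + star a) ?_
  refine pos_congr (y := n • (a + star a)) ?_
    (pos_add hP (pos_of_sSums (sSums_nsmul 2 (sSums_gen a))))
  module

lemma cone_add {a b : A} (ha : a ∈ cone A) (hb : b ∈ cone A) : a + b ∈ cone A := by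
  obtain ⟨m, hm, hPa⟩ := cone_iff.mp ha
  obtain ⟨n, hn, hPb⟩ := cone_iff.mp hb
  have hsa := cone_s_pos hm hPa
  have hsb := cone_s_pos hn hPb
  refine cone_iff.mpr ⟨2 * (m + n), by omega, ?_⟩
  have hr : star (a - b) * (a - b) ∈ pos A := pos_of_sSums (sSums_gen _)
  refine pos_congr ?_ (pos_add (pos_add (pos_add (pos_add
    (pos_nsmul 2 hPa) (pos_nsmul 2 hPb))
    (pos_nsmul (2 * n) hsa)) (pos_nsmul (2 * m) hsb)) (pos_nsmul 2 hr))
  simp only [star_add, star_sub, mul_add, add_mul, sub_mul, mul_sub]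
  module

lemma cone_zero : (0 : A) ∈ cone A := by
  refine cone_iff.mpr ⟨1, one_pos, pos_congr ?_ (pos_of_sSums sSums_zero)⟩
  simp

end helper

theorem stmt6 {A : Type*} [Ring A] [StarRing A]
    (proper : ∀ a : A, star a * a = 0 → a = 0)
    (salient : sSums A ∩ (-sSums A) = {0}) :
    star '' cone A = cone A ∧ cone A + cone A = cone A ∧
      cone A ∩ (-cone A) = {0} := by
  refine ⟨?_, ?_, ?_⟩
  · ext x
    constructor
    · rintro ⟨a, ha, rfl⟩
      exact cone_star ha
    · intro hx
      exact ⟨star x, cone_star hx, star_star x⟩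
  · ext x
    constructor
    · rintro ⟨a, ha, b, hb, rfl⟩
      exact cone_add ha hb
    · intro hx
      exact ⟨x, hx, 0, cone_zero, add_zero x⟩
  · ext x
    simp only [Set.mem_inter_iff, Set.mem_neg, Set.mem_singleton_iff]
    constructor
    · rintro ⟨hx, hx'⟩
      obtain ⟨m, hm, hP1⟩ := cone_iff.mp hx
      obtain ⟨n, hn, hP2'⟩ := cone_iff.mp hx'
      set w : A := star x * x with hw
      have hP2 : -(n • (x + star x)) - 2 • w ∈ pos A := by
        refine pos_congr ?_ hP2'
        simp only [star_neg, mul_neg, neg_mul, neg_neg]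
        module
      obtain ⟨k₁, hk₁, h1⟩ := hP1
      obtain ⟨k₂, hk₂, h2⟩ := hP2
      set K : ℕ := 2 * k₁ * k₂ * (m + n) with hK
      have hKw : K • w ∈ sSums A := sSums_nsmul K (sSums_gen x)
      have hKw' : -(K • w) ∈ sSums A := by
        have hmem := sSums_add (sSums_nsmul (n * k₂) h1) (sSums_nsmul (m * k₁) h2)
        refine (show (n * k₂) • k₁ • (m • (x + star x) - 2 • w)
            + (m * k₁) • k₂ • (-(n • (x + star x)) - 2 • w) = -(K • w) from ?_) ▸ hmem
        rw [hK]
        module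
      have hK0 : K • w = 0 := by
        have : K • w ∈ sSums A ∩ (-sSums A) := ⟨hKw, by simpa using hKw'⟩
        rwa [salient, Set.mem_singleton_iff] at this
      have hK1 : 0 < K := by
        rw [hK]
        exact Nat.mul_pos (Nat.mul_pos (Nat.mul_pos two_pos hk₁) hk₂) (by omega)
      have hwneg : -w ∈ sSums A := by
        have h3 : (K - 1) • w + w = K • w := by rw [← succ_nsmul, Nat.sub_add_cancel hK1]
        have h4 : (K - 1) • w = -w := eq_neg_of_add_eq_zero_left (by rw [h3, hK0])
        exact h4 ▸ sSums_nsmul (K - 1) (sSums_gen x)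
      have hw0 : w = 0 := by
        have : w ∈ sSums A ∩ (-sSums A) := ⟨sSums_gen x, by simpa using hwneg⟩
        rwa [salient, Set.mem_singleton_iff] at this
      exact proper x hw0
    · rintro rfl
      exact ⟨cone_zero, by simpa using cone_zero⟩
end

section
/- In a proper unital *-ring A with A_Σ salient and satisfying A_+A_+ ∩ A_sa ⊆ A_+, decompositions are unique: if a,b,c,d ∈ A_+ with ab = 0, cd = 0, and a − b = c − d, then a = c and b = d. -/
open Pointwise

section Aux

variable {A : Type*} [Ring A] [StarRing A]

lemma starMulSelf_mem_sSums (x : A) : star x * x ∈ sSums A :=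
  AddSubmonoid.subset_closure ⟨x, rfl⟩

lemma sSums_star {s : A} (hs : s ∈ sSums A) : star s = s := by
  induction hs using AddSubmonoid.closure_induction with
  | mem x hx => obtain ⟨a, rfl⟩ := hx; simp [star_mul, mul_assoc]
  | zero => simp
  | add x y _ _ hx hy => rw [star_add, hx, hy]

lemma sSums_nsmul_mem {s : A} (hs : s ∈ sSums A) (n : ℕ) : n • s ∈ sSums A := by
  have hs' : s ∈ AddSubmonoid.closure {x : A | ∃ a : A, x = star a * a} := hs
  exact nsmul_mem hs' n

/-- If a positive natural multiple of an element of `sSums` vanishes, the element vanishes. -/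
lemma sSums_torsion (salient : sSums A ∩ (-sSums A) = {0})
    {s : A} (hs : s ∈ sSums A) {n : ℕ} (hn : 0 < n) (h : n • s = 0) : s = 0 := by
  have hneg : -s = (n - 1) • s := by
    have h2 : (n - 1) • s + s = n • s := by
      rw [← succ_nsmul, Nat.sub_add_cancel hn]
    rw [h] at h2
    exact (neg_eq_of_add_eq_zero_left h2)
  have hmem : s ∈ sSums A ∩ (-sSums A) := by
    refine ⟨hs, ?_⟩
    rw [Set.mem_neg, hneg]
    exact sSums_nsmul_mem hs _
  rw [salient] at hmem
  exact hmem

/-- `A` is torsion-free. -/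
lemma torsionfree (proper : ∀ a : A, star a * a = 0 → a = 0)
    (salient : sSums A ∩ (-sSums A) = {0})
    {x : A} {n : ℕ} (hn : 0 < n) (h : n • x = 0) : x = 0 := by
  have hs : n • (star x * x) = 0 := by
    rw [← mul_smul_comm, h, mul_zero]
  exact proper x (sSums_torsion salient (starMulSelf_mem_sSums x) hn hs)

/-- Positive elements are self-adjoint. -/
lemma pos_star (proper : ∀ a : A, star a * a = 0 → a = 0)
    (salient : sSums A ∩ (-sSums A) = {0})
    {a : A} (ha : a ∈ pos A) : star a = a := by
  obtain ⟨n, hn, hna⟩ := ha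
  have h1 : star (n • a) = n • a := sSums_star hna
  rw [star_nsmul] at h1
  have h2 : n • (star a - a) = 0 := by
    rw [smul_sub, h1, sub_self]
  exact sub_eq_zero.mp (torsionfree proper salient hn h2)

lemma pos_add_s17 {a b : A} (ha : a ∈ pos A) (hb : b ∈ pos A) : a + b ∈ pos A := by
  obtain ⟨n, hn, hna⟩ := ha
  obtain ⟨m, hm, hmb⟩ := hb
  refine ⟨n * m, Nat.mul_pos hn hm, ?_⟩
  rw [smul_add]
  refine AddSubmonoid.add_mem _ ?_ ?_
  · rw [mul_comm, mul_smul]; exact sSums_nsmul_mem hna m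
  · rw [mul_smul]; exact sSums_nsmul_mem hmb n

lemma sSums_subset_pos {s : A} (hs : s ∈ sSums A) : s ∈ pos A :=
  ⟨1, Nat.one_pos, by rwa [one_smul]⟩

lemma pos_salient (proper : ∀ a : A, star a * a = 0 → a = 0)
    (salient : sSums A ∩ (-sSums A) = {0})
    {a : A} (ha : a ∈ pos A) (hb : -a ∈ pos A) : a = 0 := by
  obtain ⟨n, hn, hna⟩ := ha
  obtain ⟨m, hm, hmb⟩ := hb
  have h1 : (m * n) • a ∈ sSums A := by
    rw [mul_smul]; exact sSums_nsmul_mem hna m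
  have h2 : (m * n) • a ∈ -sSums A := by
    rw [Set.mem_neg, ← smul_neg, mul_comm, mul_smul]
    exact sSums_nsmul_mem hmb n
  have hmem : (m * n) • a ∈ sSums A ∩ (-sSums A) := ⟨h1, h2⟩
  rw [salient] at hmem
  exact torsionfree proper salient (Nat.mul_pos hm hn) hmem

end Aux

theorem stmt17 {A : Type*} [Ring A] [StarRing A]
    (proper : ∀ a : A, star a * a = 0 → a = 0)
    (salient : sSums A ∩ (-sSums A) = {0})
    (posmul : ∀ x : A, (∃ a ∈ pos A, ∃ b ∈ pos A, x = a * b) → star x = x → x ∈ pos A)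
    (a b c d : A) (ha : a ∈ pos A) (hb : b ∈ pos A) (hc : c ∈ pos A)
    (hd : d ∈ pos A) (hab : a * b = 0) (hcd : c * d = 0)
    (hdec : a - b = c - d) : a = c ∧ b = d := by
  have ha' := pos_star proper salient ha
  have hb' := pos_star proper salient hb
  have hc' := pos_star proper salient hc
  have hd' := pos_star proper salient hd
  have hba : b * a = 0 := by
    have h := congrArg star hab
    rwa [star_mul, ha', hb', star_zero] at h
  have hdc : d * c = 0 := by
    have h := congrArg star hcd
    rwa [star_mul, hc', hd', star_zero] at h
  have hbd : b - d = a - c := (sub_eq_sub_iff_sub_eq_sub.mp hdec).symm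
  have hx1 : (a + c) * (b + d) = a * d + c * b := by
    have h : (a + c) * (b + d) = a * b + (a * d + c * b) + c * d := by noncomm_ring
    rw [h, hab, hcd, zero_add, add_zero]
  have hee : (a - c) * (a - c) = -(a * d + c * b) := by
    calc (a - c) * (a - c) = (a - c) * (b - d) := by rw [hbd]
    _ = a * b + c * d - (a * d + c * b) := by noncomm_ring
    _ = -(a * d + c * b) := by rw [hab, hcd, add_zero, zero_sub]
  have hee' : (a - c) * (a - c) = -(b * c + d * a) := by
    calc (a - c) * (a - c) = (b - d) * (a - c) := by rw [hbd]
    _ = b * a + d * c - (b * c + d * a) := by noncomm_ring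
    _ = -(b * c + d * a) := by rw [hba, hdc, add_zero, zero_sub]
  have h3 : b * c + d * a = a * d + c * b := neg_injective (hee'.symm.trans hee)
  have hstarx : star ((a + c) * (b + d)) = (a + c) * (b + d) := by
    rw [star_mul, star_add, star_add, ha', hb', hc', hd']
    have h4 : (b + d) * (a + c) = b * a + (b * c + d * a) + d * c := by noncomm_ring
    rw [h4, hba, hdc, zero_add, add_zero, h3, hx1]
  have hxpos : (a + c) * (b + d) ∈ pos A :=
    posmul _ ⟨a + c, pos_add_s17 ha hc, b + d, pos_add_s17 hb hd, rfl⟩ hstarx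
  have hneg : star (a - c) * (a - c) = -((a + c) * (b + d)) := by
    rw [star_sub, ha', hc', hee, hx1]
  have hnegx : -((a + c) * (b + d)) ∈ pos A := by
    rw [← hneg]
    exact sSums_subset_pos (starMulSelf_mem_sSums (a - c))
  have hx0 : (a + c) * (b + d) = 0 := pos_salient proper salient hxpos hnegx
  have he0 : a - c = 0 := by
    apply proper
    rw [hneg, hx0, neg_zero]
  refine ⟨sub_eq_zero.mp he0, sub_eq_zero.mp ?_⟩
  rw [hbd, he0]
end
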